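/- Let D^{p,q} be a double complex of right R-modules. If every row D^{*,q} is exact, then the right truncated totalisation rtTot D (whose degree-n term is the right truncated product over p of D^{p,n-p}, i.e. sequences (x_p) with x_p = 0 for p ≫ 0, with differential d^h + d^v) is acyclic. -/
import Mathlib

noncomputable section

namespace Novikov
variable (S : Type*) [Semiring S]
variable (D : ℤ → ℤ → Type*) [∀ p q, AddCommGroup (D p q)] [∀ p q, Module S (D p q)]

/-- Transport along equalities of the indices of a bigraded family of modules. -/
def lcast (p p' q q' : ℤ) (h1 : p = p') (h2 : q = q') : D p q →ₗ[S] D p' q' := by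
  subst h1; subst h2; exact LinearMap.id

variable (dh : ∀ p q, D p q →ₗ[S] D (p + 1) q) (dv : ∀ p q, D p q →ₗ[S] D p (q + 1))

/-- The component at `p` of the total differential `d = d^h + d^v`, mapping degree-`n`
elements of the totalisation (families `(x_p)_p` with `x_p ∈ D^{p, n-p}`) to degree `n+1`. -/
def totalD (n : ℤ) (x : ∀ p, D p (n - p)) (p : ℤ) : D p (n + 1 - p) :=
  lcast S D p p (n - p + 1) (n + 1 - p) rfl (by ring) (dv p (n - p) (x p)) +
    lcast S D (p - 1 + 1) p (n - (p - 1)) (n + 1 - p) (by ring) (by ring)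
      (dh (p - 1) (n - (p - 1)) (x (p - 1)))

end Novikov

namespace Novikov
variable {S : Type*} [Semiring S]
variable {D : ℤ → ℤ → Type*} [∀ p q, AddCommGroup (D p q)] [∀ p q, Module S (D p q)]

lemma lcast_refl (p q : ℤ) (h1 : p = p) (h2 : q = q) (v : D p q) :
    lcast S D p p q q h1 h2 v = v := rfl

lemma lcast_lcast {p p' p'' q q' q'' : ℤ} (h1 h2 h1' h2') (v : D p q) :
    lcast S D p' p'' q' q'' h1' h2' (lcast S D p p' q q' h1 h2 v) =
    lcast S D p p'' q q'' (h1.trans h1') (h2.trans h2') v := by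
  subst h1 h2 h1' h2'; rfl

lemma lcast_inj {p p' q q' : ℤ} (h1 h2) {v w : D p q}
    (h : lcast S D p p' q q' h1 h2 v = lcast S D p p' q q' h1 h2 w) : v = w := by
  subst h1 h2; exact h

lemma dh_lcast (dh : ∀ p q, D p q →ₗ[S] D (p + 1) q) {p p' q q' : ℤ} (h1 h2) (v : D p q) :
    dh p' q' (lcast S D p p' q q' h1 h2 v) =
    lcast S D (p+1) (p'+1) q q' (by rw [h1]) h2 (dh p q v) := by
  subst h1 h2; rfl

lemma dv_lcast (dv : ∀ p q, D p q →ₗ[S] D p (q + 1)) {p p' q q' : ℤ} (h1 h2) (v : D p q) :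
    dv p' q' (lcast S D p p' q q' h1 h2 v) =
    lcast S D p p' (q+1) (q'+1) h1 (by rw [h2]) (dv p q v) := by
  subst h1 h2; rfl

lemma apply_cast (f : ℤ → ℤ) (x : ∀ p, D p (f p)) {p p' : ℤ} (h : p = p') :
    x p' = lcast S D p p' (f p) (f p') h (by rw [h]) (x p) := by
  subst h; rfl

variable (S D) in
/-- target for the horizontal lift defining `y p`, given the value `w = y (p+1)`. -/
def tgt (dv : ∀ p q, D p q →ₗ[S] D p (q + 1)) (n : ℤ) (x : ∀ p, D p (n - p)) (p : ℤ)
    (w : D (p+1) (n-1-(p+1))) : D (p+1) (n-1-p) :=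
  lcast S D (p+1) (p+1) (n-(p+1)) (n-1-p) rfl (by ring)
    (x (p+1) - lcast S D (p+1) (p+1) (n-1-(p+1)+1) (n-(p+1)) rfl (by ring)
      (dv (p+1) (n-1-(p+1)) w))

variable (S D) in
open Classical in
noncomputable def aux (dh : ∀ p q, D p q →ₗ[S] D (p + 1) q)
    (dv : ∀ p q, D p q →ₗ[S] D p (q + 1))
    (n k : ℤ) (x : ∀ p, D p (n - p)) : ℕ → ∀ p : ℤ, D p (n - 1 - p)
  | 0, _ => 0
  | (m+1), p =>
      if k - m < p then aux dh dv n k x m p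
      else if h : ∃ u : D p (n-1-p),
          dh p (n-1-p) u = tgt S D dv n x p (aux dh dv n k x m (p+1))
        then h.choose else 0

variable {dh : ∀ p q, D p q →ₗ[S] D (p + 1) q} {dv : ∀ p q, D p q →ₗ[S] D p (q + 1)}

lemma aux_stable (n k : ℤ) (x : ∀ p, D p (n - p)) (m : ℕ) (p : ℤ) (h : k - m < p) :
    aux S D dh dv n k x (m+1) p = aux S D dh dv n k x m p := by
  rw [aux, if_pos h]

lemma aux_agree (n k : ℤ) (x : ∀ p, D p (n - p)) (m : ℕ) (p : ℤ) (h : k + 1 - p ≤ m) :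
    aux S D dh dv n k x m p = aux S D dh dv n k x ((k+1-p).toNat) p := by
  induction m with
  | zero => congr 1; omega
  | succ m ih =>
    rcases le_or_gt (k + 1 - p) m with h' | h'
    · rw [aux_stable n k x m p (by omega), ih h']
    · congr 1; omega

variable (S D dh dv) in
noncomputable def Y (n k : ℤ) (x : ∀ p, D p (n - p)) (p : ℤ) : D p (n - 1 - p) :=
  aux S D dh dv n k x ((k+1-p).toNat) p

lemma Y_top (n k : ℤ) (x : ∀ p, D p (n - p)) (p : ℤ) (hp : k < p) :
    Y S D dh dv n k x p = 0 := by
  unfold Y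
  have : (k+1-p).toNat = 0 := by omega
  rw [this, aux]

open Classical in
lemma Y_rec (n k : ℤ) (x : ∀ p, D p (n - p)) (p : ℤ) (hp : p ≤ k) :
    Y S D dh dv n k x p =
      if h : ∃ u : D p (n-1-p),
          dh p (n-1-p) u = tgt S D dv n x p (Y S D dh dv n k x (p+1))
        then h.choose else 0 := by
  unfold Y
  have h1 : (k+1-p).toNat = (k-p).toNat + 1 := by omega
  rw [h1, aux, if_neg (by omega),
    aux_agree n k x ((k-p).toNat) (p+1) (by omega)]

open Classical in
variable (S D dh dv) in
def Cnd (n : ℤ) (x : ∀ p, D p (n - p)) (y : ∀ p, D p (n - 1 - p)) (p : ℤ) : Prop :=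
  lcast S D p p (n - 1 + 1 - p) (n - p) rfl (by ring) (totalD S D dh dv (n - 1) y p) = x p

lemma Y_lift (n k : ℤ) (x : ∀ p, D p (n - p)) (p : ℤ) (hp : p ≤ k)
    (h : ∃ u : D p (n-1-p),
        dh p (n-1-p) u = tgt S D dv n x p (Y S D dh dv n k x (p+1))) :
    dh p (n-1-p) (Y S D dh dv n k x p) = tgt S D dv n x p (Y S D dh dv n k x (p+1)) := by
  rw [Y_rec n k x p hp, dif_pos h]; exact h.choose_spec

end Novikov

open Novikov in
/-- Let `D^{p,q}` be a double complex of right `R`-modules (= left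
`Rᵐᵒᵖ`-modules).  If every row `D^{*,q}` is exact, then the right truncated totalisation
`rtTot D` — whose degree-`n` term consists of the families `(x_p)_p` with `x_p ∈ D^{p,n-p}`
and `x_p = 0` for `p ≫ 0`, with differential `d^h + d^v` — is acyclic. -/
theorem rtTot_acyclic_of_exact_rows
    (R : Type*) [Ring R]
    (D : ℤ → ℤ → Type*) [∀ p q, AddCommGroup (D p q)] [∀ p q, Module Rᵐᵒᵖ (D p q)]
    (dh : ∀ p q, D p q →ₗ[Rᵐᵒᵖ] D (p + 1) q) (dv : ∀ p q, D p q →ₗ[Rᵐᵒᵖ] D p (q + 1))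
    (hhh : ∀ p q (v : D p q), dh (p + 1) q (dh p q v) = 0)
    (hvv : ∀ p q (v : D p q), dv p (q + 1) (dv p q v) = 0)
    (hanti : ∀ p q (v : D p q), dh p (q + 1) (dv p q v) = - dv (p + 1) q (dh p q v))
    (hrow : ∀ p q (v : D (p + 1) q), dh (p + 1) q v = 0 → ∃ u : D p q, dh p q u = v) :
    ∀ (n : ℤ) (x : ∀ p, D p (n - p)),
      (∃ k, ∀ p > k, x p = 0) →
      (∀ p, totalD Rᵐᵒᵖ D dh dv n x p = 0) →
      ∃ y : ∀ p, D p (n - 1 - p),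
        (∃ k, ∀ p > k, y p = 0) ∧
        ∀ p, lcast Rᵐᵒᵖ D p p (n - 1 + 1 - p) (n - p) rfl (by ring)
          (totalD Rᵐᵒᵖ D dh dv (n - 1) y p) = x p := by
  intro n x hbd hx
  obtain ⟨k, hk⟩ := hbd
  refine ⟨Y Rᵐᵒᵖ D dh dv n k x, ⟨k, fun p hp => Y_top n k x p hp⟩, ?_⟩
  suffices h : ∀ p, Cnd Rᵐᵒᵖ D dh dv n x (Y Rᵐᵒᵖ D dh dv n k x) p from h
  set Cnd' := Cnd Rᵐᵒᵖ D dh dv n x (Y Rᵐᵒᵖ D dh dv n k x) with hC'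
  show ∀ p, Cnd' p
  have triv : ∀ p : ℤ, k + 1 < p → Cnd' p := by
    intro p hp
    simp only [hC', Cnd, totalD, map_add, lcast_lcast]
    rw [Y_top n k x p (by omega), Y_top n k x (p - 1) (by omega), hk p (by omega)]
    simp
  have step : ∀ p : ℤ, p ≤ k + 1 → Cnd' (p + 1) → Cnd' p := by
    intro p hp hnext
    have hp1 : p = p - 1 + 1 := by ring
    have hp2 : p = p + 1 - 1 := by ring
    -- normalize `hnext`
    simp only [hC', Cnd, totalD, map_add, lcast_lcast] at hnext
    rw [apply_cast (S := Rᵐᵒᵖ) (fun t => n - 1 - t) (Y Rᵐᵒᵖ D dh dv n k x) hp2] at hnext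
    simp only [dh_lcast, lcast_lcast] at hnext
    -- apply `dv` to `hnext`
    have hW := congrArg (dv (p + 1) (n - (p + 1))) hnext
    simp only [map_add, dv_lcast, lcast_lcast, hvv, map_zero, zero_add] at hW
    -- normalize `hx (p+1)`
    have hX := hx (p + 1)
    simp only [totalD] at hX
    rw [apply_cast (S := Rᵐᵒᵖ) (fun t => n - t) x hp2] at hX
    simp only [dh_lcast, lcast_lcast] at hX
    -- existence of the lift at `p - 1`
    have hex : ∃ u : D (p - 1) (n - 1 - (p - 1)), dh (p - 1) (n - 1 - (p - 1)) u
        = tgt Rᵐᵒᵖ D dv n x (p - 1) (Y Rᵐᵒᵖ D dh dv n k x (p - 1 + 1)) := by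
      apply hrow (p - 1) (n - 1 - (p - 1))
      rw [tgt, apply_cast (S := Rᵐᵒᵖ) (fun t => n - t) x hp1,
        apply_cast (S := Rᵐᵒᵖ) (fun t => n - 1 - t) (Y Rᵐᵒᵖ D dh dv n k x) hp1]
      simp only [dv_lcast, lcast_lcast, map_sub, dh_lcast, hanti, map_neg, sub_neg_eq_add]
      have hW2 := congrArg (lcast Rᵐᵒᵖ D (p+1) (p-1+1+1) (n-(p+1)+1) (n-1-(p-1))
        (by ring) (by ring)) hW
      simp only [lcast_lcast] at hW2
      have hX2 := congrArg (lcast Rᵐᵒᵖ D (p+1) (p-1+1+1) (n+1-(p+1)) (n-1-(p-1))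
        (by ring) (by ring)) hX
      simp only [map_add, lcast_lcast, map_zero] at hX2
      rw [hW2]
      exact (add_comm _ _).trans hX2
    have hlift := Y_lift n k x (p - 1) (by omega) hex
    simp only [hC', Cnd, totalD, map_add, lcast_lcast]
    rw [hlift, tgt, apply_cast (S := Rᵐᵒᵖ) (fun t => n - t) x hp1,
      apply_cast (S := Rᵐᵒᵖ) (fun t => n - 1 - t) (Y Rᵐᵒᵖ D dh dv n k x) hp1]
    simp only [dv_lcast, lcast_lcast, map_sub, lcast_refl]
    abel
  have claim : ∀ m : ℕ, ∀ p : ℤ, k + 1 - m ≤ p → Cnd' p := by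
    intro m
    induction m with
    | zero =>
      intro p hp
      rcases lt_or_ge (k + 1) p with h' | h'
      · exact triv p h'
      · have hpk : p = k + 1 := by omega
        exact step p (by omega) (triv (p + 1) (by omega))
    | succ m ih =>
      intro p hp
      rcases le_or_gt (k + 1 - m) p with h' | h'
      · exact ih p h'
      · exact step p (by omega) (ih (p + 1) (by omega))
  intro p
  exact claim (k + 1 - p).toNat p (by omega)
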